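/- (Maehara-style interpolation for iK_d) If Γ₁, Γ₂ ⇒ Δ is provable in iK_d, then there exists a formula C such that Γ₁ ⇒ C and Γ₂, C ⇒ Δ are provable in iK_d and every atomic proposition occurring in C occurs both in Γ₁ and in Γ₂ ∪ Δ. -/

import Mathlib

inductive Formula where
  | atom : ℕ → Formula
  | top : Formula
  | bot : Formula
  | and : Formula → Formula → Formula
  | or : Formula → Formula → Formula
  | himp : Formula → Formula → Formula
  | imp : Formula → Formula → Formula
  | nabla : Formula → Formula

/-- `nIter n A` is `∇ⁿ A`. -/
def nIter (n : ℕ) (A : Formula) : Formula := Formula.nabla^[n] A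

/-- The G3-style cut-free sequent calculus `iK_d`, indexed by an upper bound on
the height of the proof-tree. -/
inductive iKd : ℕ → Multiset Formula → Option Formula → Prop where
  | idp (h : ℕ) (p : ℕ) : iKd h {Formula.atom p} (some (Formula.atom p))
  | lbot (h : ℕ) : iKd h {Formula.bot} none
  | rtop (h : ℕ) : iKd h 0 (some Formula.top)
  | lw {h : ℕ} {Γ : Multiset Formula} {Δ : Option Formula} (Sig : Multiset Formula) :
      iKd h Γ Δ → iKd (h + 1) (Γ + Sig) Δ
  | rw {h : ℕ} {Γ : Multiset Formula} (A : Formula) :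
      iKd h Γ none → iKd (h + 1) Γ (some A)
  | landn {h : ℕ} {Γ : Multiset Formula} {Δ : Option Formula} (n : ℕ) (A B : Formula) :
      iKd h (nIter n A ::ₘ nIter n B ::ₘ Γ) Δ →
      iKd (h + 1) (nIter n (Formula.and A B) ::ₘ Γ) Δ
  | rand {h : ℕ} {Γ : Multiset Formula} {A B : Formula} :
      iKd h Γ (some A) → iKd h Γ (some B) → iKd (h + 1) Γ (some (Formula.and A B))
  | lorn {h : ℕ} {Γ : Multiset Formula} {Δ : Option Formula} (n : ℕ) (A B : Formula) :
      iKd h (nIter n A ::ₘ Γ) Δ → iKd h (nIter n B ::ₘ Γ) Δ →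
      iKd (h + 1) (nIter n (Formula.or A B) ::ₘ Γ) Δ
  | ror1 {h : ℕ} {Γ : Multiset Formula} {A : Formula} (B : Formula) :
      iKd h Γ (some A) → iKd (h + 1) Γ (some (Formula.or A B))
  | ror2 {h : ℕ} {Γ : Multiset Formula} {B : Formula} (A : Formula) :
      iKd h Γ (some B) → iKd (h + 1) Γ (some (Formula.or A B))
  | limpn {h : ℕ} {Γ : Multiset Formula} {Δ : Option Formula} (n : ℕ) (A B : Formula) :
      iKd h (nIter (n + 1) (Formula.imp A B) ::ₘ Γ) (some (nIter n A)) →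
      iKd h (nIter n B ::ₘ nIter (n + 1) (Formula.imp A B) ::ₘ Γ) Δ →
      iKd (h + 1) (nIter (n + 1) (Formula.imp A B) ::ₘ Γ) Δ
  | rimp {h : ℕ} {Γ : Multiset Formula} {A B : Formula} :
      iKd h (A ::ₘ Γ.map Formula.nabla) (some B) →
      iKd (h + 1) Γ (some (Formula.imp A B))
  | lhimpn {h : ℕ} {Γ : Multiset Formula} {Δ : Option Formula} (n : ℕ) (A B : Formula) :
      iKd h (nIter n (Formula.himp A B) ::ₘ Γ) (some (nIter n A)) →
      iKd h (nIter n B ::ₘ Γ) Δ →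
      iKd (h + 1) (nIter n (Formula.himp A B) ::ₘ Γ) Δ
  | rhimp {h : ℕ} {Γ : Multiset Formula} {A B : Formula} :
      iKd h (A ::ₘ Γ) (some B) → iKd (h + 1) Γ (some (Formula.himp A B))
  | nrule {h : ℕ} {Γ : Multiset Formula} {Δ : Option Formula} :
      iKd h Γ Δ → iKd (h + 1) (Γ.map Formula.nabla) (Δ.map Formula.nabla)

/-- Provability in `iK_d`: provable with some height. -/
def iKdProvable (Γ : Multiset Formula) (Δ : Option Formula) : Prop := ∃ h, iKd h Γ Δ

/-- The set of atoms occurring in a formula. -/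
def Formula.atoms : Formula → Finset ℕ
  | Formula.atom p => {p}
  | Formula.top => ∅
  | Formula.bot => ∅
  | Formula.and A B => A.atoms ∪ B.atoms
  | Formula.or A B => A.atoms ∪ B.atoms
  | Formula.himp A B => A.atoms ∪ B.atoms
  | Formula.imp A B => A.atoms ∪ B.atoms
  | Formula.nabla A => A.atoms


/-! ### Infrastructure -/

deriving instance DecidableEq for Formula

lemma nIter_zero (A : Formula) : nIter 0 A = A := rfl

lemma nIter_succ (n : ℕ) (A : Formula) : nIter (n+1) A = Formula.nabla (nIter n A) :=
  Function.iterate_succ_apply' _ _ _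

lemma nIter_succ' (n : ℕ) (A : Formula) : nIter (n+1) A = nIter n (Formula.nabla A) :=
  Function.iterate_succ_apply _ _ _

lemma nIter_atoms (n : ℕ) (A : Formula) : (nIter n A).atoms = A.atoms := by
  induction n with
  | zero => rfl
  | succ n ih => rw [nIter_succ, Formula.atoms]; exact ih

lemma nIter_eq_cases {Y : Formula} (hY : ∀ Z, Y ≠ Formula.nabla Z) :
    ∀ {g n : ℕ} {X : Formula}, nIter g X = nIter n Y → g ≤ n ∧ X = nIter (n - g) Y := by
  intro g
  induction g with
  | zero => intro n X e; exact ⟨Nat.zero_le _, by simpa [nIter_zero] using e⟩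
  | succ g ih =>
    intro n X e
    cases n with
    | zero =>
      rw [nIter_succ] at e
      exact absurd ((by simpa [nIter_zero] using e.symm) : Y = _) (hY _)
    | succ n =>
      rw [nIter_succ, nIter_succ] at e
      obtain ⟨h1, h2⟩ := ih (Formula.nabla.inj e)
      exact ⟨Nat.succ_le_succ h1, by simpa [Nat.succ_sub_succ] using h2⟩

lemma iKd.mono {h : ℕ} {Γ : Multiset Formula} {Δ : Option Formula} (D : iKd h Γ Δ) :
    iKd (h+1) Γ Δ := by
  have := iKd.lw 0 D
  simpa using this

lemma iKd.le_mono {h h' : ℕ} (hh : h ≤ h') {Γ : Multiset Formula} {Δ : Option Formula}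
    (D : iKd h Γ Δ) : iKd h' Γ Δ := by
  induction hh with
  | refl => exact D
  | step _ ih => exact ih.mono

/-! ### Provability-level rules -/

lemma P_eq {Γ Γ' : Multiset Formula} {Δ : Option Formula} (e : Γ = Γ') :
    iKdProvable Γ Δ → iKdProvable Γ' Δ := fun ⟨h, D⟩ => ⟨h, e ▸ D⟩

lemma P_lw {Γ : Multiset Formula} {Δ : Option Formula} (S : Multiset Formula) :
    iKdProvable Γ Δ → iKdProvable (Γ + S) Δ := fun ⟨h, D⟩ => ⟨h+1, iKd.lw S D⟩

lemma P_cons {Γ : Multiset Formula} {Δ : Option Formula} (A : Formula) :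
    iKdProvable Γ Δ → iKdProvable (A ::ₘ Γ) Δ := fun H =>
  P_eq (by rw [add_comm, Multiset.singleton_add]) (P_lw {A} H)

lemma P_rw {Γ : Multiset Formula} (A : Formula) :
    iKdProvable Γ none → iKdProvable Γ (some A) := fun ⟨h, D⟩ => ⟨h+1, iKd.rw A D⟩

lemma P_landn {Γ : Multiset Formula} {Δ : Option Formula} (n : ℕ) (A B : Formula) :
    iKdProvable (nIter n A ::ₘ nIter n B ::ₘ Γ) Δ →
    iKdProvable (nIter n (Formula.and A B) ::ₘ Γ) Δ := fun ⟨h, D⟩ => ⟨h+1, iKd.landn n A B D⟩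

lemma P_rand {Γ : Multiset Formula} {A B : Formula} :
    iKdProvable Γ (some A) → iKdProvable Γ (some B) → iKdProvable Γ (some (Formula.and A B)) := by
  rintro ⟨h1, D1⟩ ⟨h2, D2⟩
  exact ⟨max h1 h2 + 1,
    iKd.rand (D1.le_mono (le_max_left _ _)) (D2.le_mono (le_max_right _ _))⟩

lemma P_lorn {Γ : Multiset Formula} {Δ : Option Formula} (n : ℕ) (A B : Formula) :
    iKdProvable (nIter n A ::ₘ Γ) Δ → iKdProvable (nIter n B ::ₘ Γ) Δ →
    iKdProvable (nIter n (Formula.or A B) ::ₘ Γ) Δ := by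
  rintro ⟨h1, D1⟩ ⟨h2, D2⟩
  exact ⟨max h1 h2 + 1,
    iKd.lorn n A B (D1.le_mono (le_max_left _ _)) (D2.le_mono (le_max_right _ _))⟩

lemma P_ror1 {Γ : Multiset Formula} {A : Formula} (B : Formula) :
    iKdProvable Γ (some A) → iKdProvable Γ (some (Formula.or A B)) :=
  fun ⟨h, D⟩ => ⟨h+1, iKd.ror1 B D⟩

lemma P_ror2 {Γ : Multiset Formula} {B : Formula} (A : Formula) :
    iKdProvable Γ (some B) → iKdProvable Γ (some (Formula.or A B)) :=
  fun ⟨h, D⟩ => ⟨h+1, iKd.ror2 A D⟩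

lemma P_limpn {Γ : Multiset Formula} {Δ : Option Formula} (n : ℕ) (A B : Formula) :
    iKdProvable (nIter (n+1) (Formula.imp A B) ::ₘ Γ) (some (nIter n A)) →
    iKdProvable (nIter n B ::ₘ nIter (n+1) (Formula.imp A B) ::ₘ Γ) Δ →
    iKdProvable (nIter (n+1) (Formula.imp A B) ::ₘ Γ) Δ := by
  rintro ⟨h1, D1⟩ ⟨h2, D2⟩
  exact ⟨max h1 h2 + 1,
    iKd.limpn n A B (D1.le_mono (le_max_left _ _)) (D2.le_mono (le_max_right _ _))⟩

lemma P_rimp {Γ : Multiset Formula} {A B : Formula} :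
    iKdProvable (A ::ₘ Γ.map Formula.nabla) (some B) →
    iKdProvable Γ (some (Formula.imp A B)) := fun ⟨h, D⟩ => ⟨h+1, iKd.rimp D⟩

lemma P_lhimpn {Γ : Multiset Formula} {Δ : Option Formula} (n : ℕ) (A B : Formula) :
    iKdProvable (nIter n (Formula.himp A B) ::ₘ Γ) (some (nIter n A)) →
    iKdProvable (nIter n B ::ₘ Γ) Δ →
    iKdProvable (nIter n (Formula.himp A B) ::ₘ Γ) Δ := by
  rintro ⟨h1, D1⟩ ⟨h2, D2⟩
  exact ⟨max h1 h2 + 1,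
    iKd.lhimpn n A B (D1.le_mono (le_max_left _ _)) (D2.le_mono (le_max_right _ _))⟩

lemma P_rhimp {Γ : Multiset Formula} {A B : Formula} :
    iKdProvable (A ::ₘ Γ) (some B) → iKdProvable Γ (some (Formula.himp A B)) :=
  fun ⟨h, D⟩ => ⟨h+1, iKd.rhimp D⟩

lemma P_nrule {Γ : Multiset Formula} {Δ : Option Formula} :
    iKdProvable Γ Δ → iKdProvable (Γ.map Formula.nabla) (Δ.map Formula.nabla) :=
  fun ⟨h, D⟩ => ⟨h+1, iKd.nrule D⟩

lemma P_top (k : ℕ) : iKdProvable 0 (some (nIter k Formula.top)) := by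
  induction k with
  | zero => exact ⟨0, iKd.rtop 0⟩
  | succ k ih =>
    have := P_nrule ih
    simpa [nIter_succ] using this

lemma nIter_nIter (m k : ℕ) (Y : Formula) : nIter m (nIter k Y) = nIter (m+k) Y :=
  (Function.iterate_add_apply _ _ _ _).symm

lemma cons_rot3 {α : Type*} (x y z : α) (s : Multiset α) :
    x ::ₘ y ::ₘ z ::ₘ s = y ::ₘ z ::ₘ x ::ₘ s := by
  rw [Multiset.cons_swap x y, Multiset.cons_swap x z]

/-! ### Multiset helpers -/

lemma le_of_le_cons_not_mem {α : Type*} [DecidableEq α] {u s : Multiset α} {a : α}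
    (h : u ≤ a ::ₘ s) (hm : a ∉ u) : u ≤ s := by
  rw [Multiset.le_iff_count] at h ⊢
  intro x
  have := h x
  rcases eq_or_ne x a with rfl | hne
  · simp [Multiset.count_eq_zero_of_notMem hm]
  · simpa [Multiset.count_cons, hne] using this

lemma le_map_exists {α β : Type*} [DecidableEq α] [DecidableEq β] {f : α → β}
    {s : Multiset α} : ∀ {u : Multiset β}, u ≤ s.map f → ∃ t, t ≤ s ∧ u = t.map f := by
  induction s using Multiset.induction_on with
  | empty =>
    intro u h
    simp only [Multiset.map_zero, Multiset.le_zero] at h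
    exact ⟨0, le_refl _, by simp [h]⟩
  | cons a s ih =>
    intro u h
    rw [Multiset.map_cons] at h
    by_cases hmem : f a ∈ u
    · obtain ⟨t, ht, hu⟩ := ih (u := u.erase (f a))
        (by simpa using Multiset.erase_le_erase (f a) h)
      refine ⟨a ::ₘ t, Multiset.cons_le_cons a ht, ?_⟩
      rw [Multiset.map_cons, ← hu, Multiset.cons_erase hmem]
    · obtain ⟨t, ht, hu⟩ := ih (le_of_le_cons_not_mem h hmem)
      exact ⟨t, le_trans ht (Multiset.le_cons_self _ _), hu⟩

lemma le_add_split {α : Type*} [DecidableEq α] {s a b : Multiset α} (h : s ≤ a + b) :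
    ∃ u v, u ≤ a ∧ v ≤ b ∧ s = u + v := by
  refine ⟨s ∩ a, s - a, Multiset.inter_le_right, ?_, ?_⟩
  · rw [Multiset.sub_le_iff_le_add]
    rwa [add_comm] at h
  · ext x
    simp only [Multiset.count_add, Multiset.count_inter, Multiset.count_sub]
    omega

/-- Split a context equation according to where the principal formula lives. -/
lemma cons_eq_split {α β : Type*} [DecidableEq α] [DecidableEq β] {f : α → β}
    {x : β} {Γr Γ₂ : Multiset β} {Γp : Multiset α}
    (e : x ::ₘ Γr = Γp.map f + Γ₂) :
    (∃ q Γp', Γp = q ::ₘ Γp' ∧ f q = x ∧ Γr = Γp'.map f + Γ₂) ∨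
    (∃ Γ₂', Γ₂ = x ::ₘ Γ₂' ∧ Γr = Γp.map f + Γ₂') := by
  have hx : x ∈ Γp.map f + Γ₂ := by rw [← e]; exact Multiset.mem_cons_self _ _
  rcases Multiset.mem_add.1 hx with hx | hx
  · obtain ⟨q, hq, hfq⟩ := Multiset.mem_map.1 hx
    refine Or.inl ⟨q, Γp.erase q, (Multiset.cons_erase hq).symm, hfq, ?_⟩
    have e2 : Γp.map f = f q ::ₘ (Γp.erase q).map f := by
      conv_lhs => rw [← Multiset.cons_erase hq]
      rw [Multiset.map_cons]
    rw [e2, hfq, Multiset.cons_add] at e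
    exact (Multiset.cons_inj_right _).1 e
  · refine Or.inr ⟨Γ₂.erase x, (Multiset.cons_erase hx).symm, ?_⟩
    have e2 : Γp.map f + Γ₂ = x ::ₘ (Γp.map f + Γ₂.erase x) := by
      conv_lhs => rw [← Multiset.cons_erase hx]
      rw [Multiset.add_cons]
    rw [e2] at e
    exact (Multiset.cons_inj_right _).1 e

lemma add_eq_zero_ms {α : Type*} {s t : Multiset α} (h : s + t = 0) : s = 0 ∧ t = 0 :=
  ⟨Multiset.le_zero.1 (h ▸ Multiset.le_add_right s t),
   Multiset.le_zero.1 (h ▸ Multiset.le_add_left t s)⟩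

/-! ### Pairs, division, and the tower of trivial strict implications -/

def pF : ℕ × Formula → Formula := fun q => nIter q.1 q.2

def pD (a : ℕ) : ℕ × Formula → Formula := fun q => nIter (q.1 - a) q.2

lemma pD_zero (Γp : Multiset (ℕ × Formula)) : Γp.map (pD 0) = Γp.map pF := by
  apply Multiset.map_congr rfl
  intro q _
  simp [pD, pF]

lemma map_zero_pairs_pF (Γ : Multiset Formula) :
    (Γ.map (fun A => ((0:ℕ), A))).map pF = Γ := by
  rw [Multiset.map_map]
  simp [pF, Function.comp_def, nIter_zero]

lemma map_zero_pairs_pD (a : ℕ) (Γ : Multiset Formula) :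
    (Γ.map (fun A => ((0:ℕ), A))).map (pD a) = Γ := by
  rw [Multiset.map_map]
  simp [pD, Function.comp_def, nIter_zero]

lemma nabla_pD_succ {Γp : Multiset (ℕ × Formula)} {a : ℕ} (hg : ∀ q ∈ Γp, a + 1 ≤ q.1) :
    (Γp.map (pD (a+1))).map Formula.nabla = Γp.map (pD a) := by
  rw [Multiset.map_map]
  apply Multiset.map_congr rfl
  intro q hq
  have := hg q hq
  simp only [Function.comp, pD]
  rw [← nIter_succ]
  congr 1
  omega

def tpow : ℕ → Formula → Formula
  | 0, Z => Z
  | k+1, Z => Formula.imp Formula.top (tpow k Z)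

lemma tpow_atoms (k : ℕ) (Z : Formula) : (tpow k Z).atoms = Z.atoms := by
  induction k with
  | zero => rfl
  | succ k ih => rw [tpow, Formula.atoms]; simp [Formula.atoms, ih]

/-- Prover side of the tower: turn a proof from the undivided context into a
proof of the towered interpolant from the divided context. -/
lemma T1 : ∀ (k : ℕ) (Γp : Multiset (ℕ × Formula)) (Z : Formula),
    (∀ q ∈ Γp, k ≤ q.1) → iKdProvable (Γp.map pF) (some Z) →
    iKdProvable (Γp.map (pD k)) (some (tpow k Z)) := by
  intro k
  induction k with
  | zero =>
    intro Γp Z _ H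
    rw [pD_zero]
    exact H
  | succ k ih =>
    intro Γp Z hg H
    apply P_rimp
    rw [nabla_pD_succ hg]
    exact P_cons _ (ih Γp Z (fun q hq => le_trans (Nat.le_succ k) (hg q hq)) H)

/-- Consumer side of the tower: the towered interpolant under `∇^k` can be
peeled back to the raw interpolant. -/
lemma T2 : ∀ (k : ℕ) (Z : Formula) (Θ : Multiset Formula) (Δ : Option Formula),
    iKdProvable (Z ::ₘ Θ) Δ → iKdProvable (nIter k (tpow k Z) ::ₘ Θ) Δ := by
  intro k
  induction k with
  | zero => intro Z Θ Δ H; exact H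
  | succ k ih =>
    intro Z Θ Δ H
    show iKdProvable (nIter (k+1) (Formula.imp Formula.top (tpow k Z)) ::ₘ Θ) Δ
    apply P_limpn k Formula.top (tpow k Z)
    · have : iKdProvable (0 + (nIter (k+1) (Formula.imp Formula.top (tpow k Z)) ::ₘ Θ))
          (some (nIter k Formula.top)) := P_lw _ (P_top k)
      simpa using this
    · have := ih Z (nIter (k+1) (Formula.imp Formula.top (tpow k Z)) ::ₘ Θ) Δ
        (P_eq (Multiset.cons_swap _ _ _) (P_cons _ H))
      exact this

def unNabla : Formula → Formula
  | Formula.nabla X => X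
  | X => X

def pd : ℕ × Formula → ℕ × Formula :=
  fun q => if q.1 = 0 then (0, unNabla q.2) else (q.1 - 1, q.2)

lemma pd_spec {q : ℕ × Formula} {Y : Formula} (hq : pF q = Formula.nabla Y) :
    Formula.nabla (pF (pd q)) = pF q ∧ (pd q).2.atoms = q.2.atoms ∧ (pd q).1 = q.1 - 1 := by
  obtain ⟨g, X⟩ := q
  cases g with
  | zero =>
    have hX : X = Formula.nabla Y := hq
    subst hX
    refine ⟨?_, ?_, ?_⟩ <;> simp [pd, pF, unNabla, nIter_zero, Formula.atoms]
  | succ g' =>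
    have hpd : pd (g' + 1, X) = (g', X) := by simp [pd]
    rw [hpd]
    refine ⟨?_, rfl, rfl⟩
    show Formula.nabla (nIter g' X) = nIter (g' + 1) X
    exact (nIter_succ _ _).symm


/-! ### Atom-occurrence predicates -/

abbrev inCtx (p : ℕ) (Γ : Multiset Formula) : Prop := ∃ A ∈ Γ, p ∈ A.atoms

abbrev inOpt (p : ℕ) (Δ : Option Formula) : Prop := ∃ D ∈ Δ, p ∈ D.atoms

abbrev inPairs (p : ℕ) (Γp : Multiset (ℕ × Formula)) : Prop := ∃ q ∈ Γp, p ∈ q.2.atoms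

lemma inCtx_mono {p : ℕ} {Γ Γ' : Multiset Formula} (h : Γ ≤ Γ') :
    inCtx p Γ → inCtx p Γ' := fun ⟨A, hA, hp⟩ => ⟨A, Multiset.mem_of_le h hA, hp⟩

lemma inCtx_cons {p : ℕ} {A : Formula} {Γ : Multiset Formula} :
    inCtx p (A ::ₘ Γ) ↔ p ∈ A.atoms ∨ inCtx p Γ := by
  constructor
  · rintro ⟨X, hX, hp⟩
    rcases Multiset.mem_cons.1 hX with rfl | hX
    · exact Or.inl hp
    · exact Or.inr ⟨X, hX, hp⟩
  · rintro (hp | ⟨X, hX, hp⟩)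
    · exact ⟨A, Multiset.mem_cons_self _ _, hp⟩
    · exact ⟨X, Multiset.mem_cons_of_mem hX, hp⟩

lemma inCtx_map_nabla {p : ℕ} {Γ : Multiset Formula} :
    inCtx p (Γ.map Formula.nabla) ↔ inCtx p Γ := by
  constructor
  · rintro ⟨X, hX, hp⟩
    obtain ⟨Y, hY, rfl⟩ := Multiset.mem_map.1 hX
    exact ⟨Y, hY, by simpa [Formula.atoms] using hp⟩
  · rintro ⟨X, hX, hp⟩
    exact ⟨X.nabla, Multiset.mem_map_of_mem _ hX, by simpa [Formula.atoms] using hp⟩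

lemma inOpt_some {p : ℕ} {X : Formula} : inOpt p (some X) ↔ p ∈ X.atoms := by
  constructor
  · rintro ⟨D, hD, hp⟩
    simp only [Option.mem_def, Option.some.injEq] at hD
    subst hD
    exact hp
  · intro hp
    exact ⟨X, rfl, hp⟩

/-! ### The generalized interpolation statement -/

def Interp (h : ℕ) : Prop :=
  ∀ (a : ℕ) (Γp : Multiset (ℕ × Formula)) (Γ₂ : Multiset Formula) (Δ : Option Formula),
    (∀ q ∈ Γp, a ≤ q.1) →
    iKd h (Γp.map pF + Γ₂) Δ →
    ∃ C : Formula,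
      iKdProvable (Γp.map (pD a)) (some C) ∧
      iKdProvable (nIter a C ::ₘ Γ₂) Δ ∧
      ∀ p ∈ C.atoms, inPairs p Γp ∧ (inCtx p Γ₂ ∨ inOpt p Δ)

lemma atoms_map_pF {Γp : Multiset (ℕ × Formula)} {p : ℕ} :
    (∃ A ∈ Γp.map pF, p ∈ A.atoms) ↔ ∃ q ∈ Γp, p ∈ q.2.atoms := by
  constructor
  · rintro ⟨A, hA, hp⟩
    obtain ⟨q, hq, rfl⟩ := Multiset.mem_map.1 hA
    refine ⟨q, hq, ?_⟩
    rwa [show pF q = nIter q.1 q.2 from rfl, nIter_atoms] at hp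
  · rintro ⟨q, hq, hp⟩
    refine ⟨pF q, Multiset.mem_map_of_mem _ hq, ?_⟩
    rwa [show pF q = nIter q.1 q.2 from rfl, nIter_atoms]

/-- Swap form of the inductive hypothesis: plain (division-0) Maehara
interpolation with the two zones exchanged. -/
lemma swap_call {h' : ℕ} (ih : Interp h') {Γleft Γright : Multiset Formula}
    {Δ : Option Formula} (D : iKd h' (Γright + Γleft) Δ) :
    ∃ C, iKdProvable Γleft (some C) ∧ iKdProvable (C ::ₘ Γright) Δ ∧
      ∀ p ∈ C.atoms, inCtx p Γleft ∧ (inCtx p Γright ∨ inOpt p Δ) := by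
  obtain ⟨C, h1, h2, h3⟩ := ih 0 (Γleft.map fun A => ((0:ℕ), A)) Γright Δ
    (by intro q _; exact Nat.zero_le _)
    (by rwa [map_zero_pairs_pF, add_comm])
  refine ⟨C, by rwa [map_zero_pairs_pD] at h1, by simpa [nIter_zero] using h2, ?_⟩
  intro p hp
  obtain ⟨hL, hR⟩ := h3 p hp
  refine ⟨?_, hR⟩
  obtain ⟨q, hq, hpq⟩ := hL
  obtain ⟨A, hA, rfl⟩ := Multiset.mem_map.1 hq
  exact ⟨A, hA, hpq⟩

/-- Plain (division-0) call of the inductive hypothesis with explicit pairs. -/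
lemma plain_call {h' : ℕ} (ih : Interp h') {Γp : Multiset (ℕ × Formula)}
    {Γ₂ : Multiset Formula} {Δ : Option Formula} (D : iKd h' (Γp.map pF + Γ₂) Δ) :
    ∃ C, iKdProvable (Γp.map pF) (some C) ∧ iKdProvable (C ::ₘ Γ₂) Δ ∧
      ∀ p ∈ C.atoms, inPairs p Γp ∧ (inCtx p Γ₂ ∨ inOpt p Δ) := by
  obtain ⟨C, h1, h2, h3⟩ := ih 0 Γp Γ₂ Δ (fun q _ => Nat.zero_le _) D
  exact ⟨C, by rwa [pD_zero] at h1, by simpa [nIter_zero] using h2, h3⟩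

lemma inOpt_map_nabla {p : ℕ} {Δ : Option Formula} :
    inOpt p (Δ.map Formula.nabla) ↔ inOpt p Δ := by
  cases Δ with
  | none => simp [inOpt]
  | some X =>
    show inOpt p (some (Formula.nabla X)) ↔ _
    rw [inOpt_some, inOpt_some]
    simp [Formula.atoms]

lemma interp_main : ∀ h, Interp h := by
  intro h
  induction h using Nat.strong_induction_on with
  | _ h IH =>
  intro a Γp Γ₂ Δ hg D
  generalize hE : Γp.map pF + Γ₂ = G at D
  cases D with
  | idp h p =>
    have hE' : Formula.atom p ::ₘ (0 : Multiset Formula) = Γp.map pF + Γ₂ := by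
      simpa using hE.symm
    rcases cons_eq_split hE' with ⟨q, Γp', rfl, hfq, hrest⟩ | ⟨Γ₂', hG2, hrest⟩
    · obtain ⟨h1, h2⟩ := add_eq_zero_ms hrest.symm
      have hΓp' : Γp' = 0 := by simpa using h1
      obtain ⟨g, X⟩ := q
      obtain ⟨hg0, hX⟩ := nIter_eq_cases (Y := Formula.atom p)
        (fun Z hz => by cases hz) (n := 0) hfq
      have hg00 : g = 0 := Nat.le_zero.1 hg0
      have ha0 : a = 0 := by
        have := hg (g, X) (by simp)
        omega
      subst hΓp' h2 hg00 ha0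
      have hXX : X = Formula.atom p := by simpa [nIter_zero] using hX
      subst hXX
      refine ⟨Formula.atom p, ?_, ?_, ?_⟩
      · refine ⟨0, ?_⟩
        have : ((((0:ℕ), Formula.atom p) ::ₘ (0 : Multiset (ℕ × Formula))).map (pD 0))
            = {Formula.atom p} := by simp [pD, nIter_zero]
        rw [this]
        exact iKd.idp 0 p
      · refine ⟨0, ?_⟩
        have : (nIter 0 (Formula.atom p) ::ₘ (0 : Multiset Formula)) = {Formula.atom p} := by
          simp [nIter_zero]
        rw [this]
        exact iKd.idp 0 p
      · intro p' hp'
        have hpp : p' = p := by simpa [Formula.atoms] using hp'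
        exact ⟨⟨(0, Formula.atom p), by simp, by simp [Formula.atoms, hpp]⟩,
          Or.inr ⟨Formula.atom p, rfl, by simp [Formula.atoms, hpp]⟩⟩
    · obtain ⟨h1, h2⟩ := add_eq_zero_ms hrest.symm
      have hΓp : Γp = 0 := by simpa using h1
      subst hΓp h2
      refine ⟨Formula.top, ⟨0, by simpa using iKd.rtop 0⟩, ?_, ?_⟩
      · subst hG2
        exact P_cons _ ⟨0, iKd.idp 0 p⟩
      · intro p' hp'
        simp [Formula.atoms] at hp'
  | lbot h =>
    have hE' : Formula.bot ::ₘ (0 : Multiset Formula) = Γp.map pF + Γ₂ := by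
      simpa using hE.symm
    rcases cons_eq_split hE' with ⟨q, Γp', rfl, hfq, hrest⟩ | ⟨Γ₂', hG2, hrest⟩
    · obtain ⟨h1, h2⟩ := add_eq_zero_ms hrest.symm
      have hΓp' : Γp' = 0 := by simpa using h1
      obtain ⟨g, X⟩ := q
      obtain ⟨hg0, hX⟩ := nIter_eq_cases (Y := Formula.bot)
        (fun Z hz => by cases hz) (n := 0) hfq
      have hg00 : g = 0 := Nat.le_zero.1 hg0
      have ha0 : a = 0 := by
        have := hg (g, X) (by simp)
        omega
      subst hΓp' h2 hg00 ha0
      have hXX : X = Formula.bot := by simpa [nIter_zero] using hX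
      subst hXX
      refine ⟨Formula.bot, ?_, ?_, ?_⟩
      · apply P_rw
        refine ⟨0, ?_⟩
        have : ((((0:ℕ), Formula.bot) ::ₘ (0 : Multiset (ℕ × Formula))).map (pD 0))
            = {Formula.bot} := by simp [pD, nIter_zero]
        rw [this]
        exact iKd.lbot 0
      · refine ⟨0, ?_⟩
        have : (nIter 0 Formula.bot ::ₘ (0 : Multiset Formula)) = {Formula.bot} := by
          simp [nIter_zero]
        rw [this]
        exact iKd.lbot 0
      · intro p' hp'
        simp [Formula.atoms] at hp'
    · obtain ⟨h1, h2⟩ := add_eq_zero_ms hrest.symm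
      have hΓp : Γp = 0 := by simpa using h1
      subst hΓp h2
      refine ⟨Formula.top, ⟨0, by simpa using iKd.rtop 0⟩, ?_, ?_⟩
      · subst hG2
        exact P_cons _ ⟨0, iKd.lbot 0⟩
      · intro p' hp'
        simp [Formula.atoms] at hp'
  | rtop h =>
    obtain ⟨h1, h2⟩ := add_eq_zero_ms hE
    have hΓp : Γp = 0 := by simpa using h1
    subst hΓp h2
    refine ⟨Formula.top, ⟨0, by simpa using iKd.rtop 0⟩, ?_, ?_⟩
    · apply P_cons
      exact ⟨0, iKd.rtop 0⟩
    · intro p' hp'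
      simp [Formula.atoms] at hp'
  | lw Sig D =>
    rename_i h' Γ'
    have hle : Γ' ≤ Γp.map pF + Γ₂ := by
      rw [hE]
      exact Multiset.le_add_right _ _
    obtain ⟨u, v, hu, hv, huv⟩ := le_add_split hle
    obtain ⟨Γp', hΓple, rfl⟩ := le_map_exists hu
    obtain ⟨C, c1, c2, c3⟩ := IH h' (Nat.lt_succ_self h') a Γp' v Δ
      (fun q hq => hg q (Multiset.mem_of_le hΓple hq)) (huv ▸ D)
    refine ⟨C, ?_, ?_, ?_⟩
    · have e1 : Γp.map (pD a) = Γp'.map (pD a) + (Γp - Γp').map (pD a) := by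
        rw [← Multiset.map_add]
        congr 1
        have : Γp' + (Γp - Γp') = Γp := by
          rw [add_comm]
          exact tsub_add_cancel_of_le hΓple
        exact this.symm
      exact P_eq e1.symm (P_lw _ c1)
    · have e2 : (nIter a C ::ₘ v) + (Γ₂ - v) = nIter a C ::ₘ Γ₂ := by
        rw [Multiset.cons_add]
        congr 1
        rw [add_comm]
        exact tsub_add_cancel_of_le hv
      exact P_eq e2 (P_lw _ c2)
    · intro p hp
      obtain ⟨⟨q, hq, hq2⟩, r⟩ := c3 p hp
      refine ⟨⟨q, Multiset.mem_of_le hΓple hq, hq2⟩, ?_⟩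
      rcases r with ⟨A, hA, hA2⟩ | r
      · exact Or.inl ⟨A, Multiset.mem_of_le hv hA, hA2⟩
      · exact Or.inr r
  | rw A D =>
    rename_i h'
    obtain ⟨C, c1, c2, c3⟩ := IH h' (Nat.lt_succ_self h') a Γp Γ₂ none hg (hE ▸ D)
    refine ⟨C, c1, P_rw A c2, ?_⟩
    intro p hp
    obtain ⟨l, r⟩ := c3 p hp
    refine ⟨l, ?_⟩
    rcases r with r | ⟨D', hD', _⟩
    · exact Or.inl r
    · exact absurd hD' (by simp)
  | landn n A B D =>
    rename_i h' Γ'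
    rcases cons_eq_split hE.symm with ⟨q, Γp', rfl, hfq, hrest⟩ | ⟨Γ₂', hG2, hrest⟩
    · -- principal in the pair zone
      obtain ⟨g, X⟩ := q
      obtain ⟨hgn0, hX0⟩ := nIter_eq_cases (Y := Formula.and A B)
        (fun Z hz => by cases hz) hfq
      have hgn : g ≤ n := hgn0
      have hX : X = nIter (n - g) (Formula.and A B) := hX0
      have hag : a ≤ g := hg (g, X) (Multiset.mem_cons_self _ _)
      have hgrade : ∀ q ∈ (n, A) ::ₘ (n, B) ::ₘ Γp', a ≤ q.1 := by
        intro q hq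
        rcases Multiset.mem_cons.1 hq with rfl | hq
        · exact le_trans hag hgn
        · rcases Multiset.mem_cons.1 hq with rfl | hq
          · exact le_trans hag hgn
          · exact hg q (Multiset.mem_cons_of_mem hq)
      obtain ⟨C, c1, c2, c3⟩ := IH h' (Nat.lt_succ_self h') a
        ((n, A) ::ₘ (n, B) ::ₘ Γp') Γ₂ Δ hgrade
        (by
          rw [Multiset.map_cons, Multiset.map_cons, Multiset.cons_add, Multiset.cons_add]
          show iKd h' (nIter n A ::ₘ nIter n B ::ₘ (Γp'.map pF + Γ₂)) Δ
          rw [← hrest]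
          exact D)
      refine ⟨C, ?_, c2, ?_⟩
      · have e1 : ((g, X) ::ₘ Γp').map (pD a)
            = nIter (n - a) (Formula.and A B) ::ₘ Γp'.map (pD a) := by
          rw [Multiset.map_cons]
          congr 1
          show nIter (g - a) X = _
          rw [hX, nIter_nIter]
          congr 1
          omega
        rw [e1]
        apply P_landn (n - a) A B
        apply P_eq ?_ c1
        rw [Multiset.map_cons, Multiset.map_cons]
        rfl
      · intro p hp
        obtain ⟨l, r⟩ := c3 p hp
        refine ⟨?_, r⟩
        have hXatoms : X.atoms = A.atoms ∪ B.atoms := by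
          rw [hX, nIter_atoms, Formula.atoms]
        rcases Multiset.mem_cons.1 l.choose_spec.1 with h1 | h1
        all_goals {
          obtain ⟨qq, hqq, hqq2⟩ := l
          rcases Multiset.mem_cons.1 hqq with rfl | hqq
          · exact ⟨(g, X), Multiset.mem_cons_self _ _, by
              rw [hXatoms, Finset.mem_union]; exact Or.inl hqq2⟩
          · rcases Multiset.mem_cons.1 hqq with rfl | hqq
            · exact ⟨(g, X), Multiset.mem_cons_self _ _, by
                rw [hXatoms, Finset.mem_union]; exact Or.inr hqq2⟩
            · exact ⟨qq, Multiset.mem_cons_of_mem hqq, hqq2⟩ }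
    · -- principal in Γ₂
      obtain ⟨C, c1, c2, c3⟩ := IH h' (Nat.lt_succ_self h') a
        Γp (nIter n A ::ₘ nIter n B ::ₘ Γ₂') Δ hg
        (by
          rw [Multiset.add_cons, Multiset.add_cons, ← hrest]
          exact D)
      refine ⟨C, c1, ?_, ?_⟩
      · rw [hG2]
        have := P_landn n A B (Γ := nIter a C ::ₘ Γ₂')
          (P_eq (cons_rot3 _ _ _ _) c2)
        exact P_eq (Multiset.cons_swap _ _ _) this
      · intro p hp
        obtain ⟨l, r⟩ := c3 p hp
        refine ⟨l, ?_⟩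
        rcases r with r | r
        · rcases inCtx_cons.1 r with hA | r
          · refine Or.inl ?_
            rw [hG2]
            exact inCtx_cons.2 (Or.inl (by
              rw [nIter_atoms] at hA
              rw [nIter_atoms, Formula.atoms, Finset.mem_union]
              exact Or.inl hA))
          · rcases inCtx_cons.1 r with hB | r
            · refine Or.inl ?_
              rw [hG2]
              exact inCtx_cons.2 (Or.inl (by
                rw [nIter_atoms] at hB
                rw [nIter_atoms, Formula.atoms, Finset.mem_union]
                exact Or.inr hB))
            · exact Or.inl (by rw [hG2]; exact inCtx_cons.2 (Or.inr r))
        · exact Or.inr r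
  | rand D1 D2 =>
    rename_i h' A B
    obtain ⟨C₁, a1, a2, a3⟩ := IH h' (Nat.lt_succ_self h') a Γp Γ₂ (some A) hg (hE ▸ D1)
    obtain ⟨C₂, b1, b2, b3⟩ := IH h' (Nat.lt_succ_self h') a Γp Γ₂ (some B) hg (hE ▸ D2)
    refine ⟨Formula.and C₁ C₂, P_rand a1 b1, ?_, ?_⟩
    · apply P_rand
      · apply P_landn a C₁ C₂
        exact P_eq (Multiset.cons_swap _ _ _) (P_cons _ a2)
      · apply P_landn a C₁ C₂
        apply P_cons
        exact b2
    · intro p hp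
      have hp' : p ∈ C₁.atoms ∨ p ∈ C₂.atoms := by
        simpa [Formula.atoms] using hp
      rcases hp' with hp' | hp'
      · obtain ⟨l, r⟩ := a3 p hp'
        refine ⟨l, ?_⟩
        rcases r with r | r
        · exact Or.inl r
        · refine Or.inr (inOpt_some.2 ?_)
          have := inOpt_some.1 r
          simp only [Formula.atoms, Finset.mem_union]
          exact Or.inl this
      · obtain ⟨l, r⟩ := b3 p hp'
        refine ⟨l, ?_⟩
        rcases r with r | r
        · exact Or.inl r
        · refine Or.inr (inOpt_some.2 ?_)
          have := inOpt_some.1 r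
          simp only [Formula.atoms, Finset.mem_union]
          exact Or.inr this
  | lorn n A B D1 D2 =>
    rename_i h' Γ'
    rcases cons_eq_split hE.symm with ⟨q, Γp', rfl, hfq, hrest⟩ | ⟨Γ₂', hG2, hrest⟩
    · obtain ⟨g, X⟩ := q
      obtain ⟨hgn0, hX0⟩ := nIter_eq_cases (Y := Formula.or A B)
        (fun Z hz => by cases hz) hfq
      have hgn : g ≤ n := hgn0
      have hX : X = nIter (n - g) (Formula.or A B) := hX0
      have hag : a ≤ g := hg (g, X) (Multiset.mem_cons_self _ _)
      have hgrA : ∀ q ∈ (n, A) ::ₘ Γp', a ≤ q.1 := by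
        intro q hq
        rcases Multiset.mem_cons.1 hq with rfl | hq
        · exact le_trans hag hgn
        · exact hg q (Multiset.mem_cons_of_mem hq)
      have hgrB : ∀ q ∈ (n, B) ::ₘ Γp', a ≤ q.1 := by
        intro q hq
        rcases Multiset.mem_cons.1 hq with rfl | hq
        · exact le_trans hag hgn
        · exact hg q (Multiset.mem_cons_of_mem hq)
      obtain ⟨C₁, a1, a2, a3⟩ := IH h' (Nat.lt_succ_self h') a ((n, A) ::ₘ Γp') Γ₂ Δ hgrA
        (by
          rw [Multiset.map_cons, Multiset.cons_add]
          show iKd h' (nIter n A ::ₘ (Γp'.map pF + Γ₂)) Δ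
          rw [← hrest]
          exact D1)
      obtain ⟨C₂, b1, b2, b3⟩ := IH h' (Nat.lt_succ_self h') a ((n, B) ::ₘ Γp') Γ₂ Δ hgrB
        (by
          rw [Multiset.map_cons, Multiset.cons_add]
          show iKd h' (nIter n B ::ₘ (Γp'.map pF + Γ₂)) Δ
          rw [← hrest]
          exact D2)
      refine ⟨Formula.or C₁ C₂, ?_, ?_, ?_⟩
      · have e1 : ((g, X) ::ₘ Γp').map (pD a)
            = nIter (n - a) (Formula.or A B) ::ₘ Γp'.map (pD a) := by
          rw [Multiset.map_cons]
          congr 1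
          show nIter (g - a) X = _
          rw [hX, nIter_nIter]
          congr 1
          omega
        rw [e1]
        apply P_lorn (n - a) A B
        · exact P_ror1 C₂ (P_eq (by rw [Multiset.map_cons]; rfl) a1)
        · exact P_ror2 C₁ (P_eq (by rw [Multiset.map_cons]; rfl) b1)
      · apply P_lorn a C₁ C₂ <;> assumption
      · intro p hp
        have hXatoms : X.atoms = A.atoms ∪ B.atoms := by
          rw [hX, nIter_atoms, Formula.atoms]
        have hp' : p ∈ C₁.atoms ∨ p ∈ C₂.atoms := by
          simpa [Formula.atoms] using hp
        rcases hp' with hp' | hp'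
        · obtain ⟨⟨qq, hqq, hqq2⟩, r⟩ := a3 p hp'
          refine ⟨?_, r⟩
          rcases Multiset.mem_cons.1 hqq with rfl | hqq
          · exact ⟨(g, X), Multiset.mem_cons_self _ _, by
              rw [hXatoms, Finset.mem_union]; exact Or.inl hqq2⟩
          · exact ⟨qq, Multiset.mem_cons_of_mem hqq, hqq2⟩
        · obtain ⟨⟨qq, hqq, hqq2⟩, r⟩ := b3 p hp'
          refine ⟨?_, r⟩
          rcases Multiset.mem_cons.1 hqq with rfl | hqq
          · exact ⟨(g, X), Multiset.mem_cons_self _ _, by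
              rw [hXatoms, Finset.mem_union]; exact Or.inr hqq2⟩
          · exact ⟨qq, Multiset.mem_cons_of_mem hqq, hqq2⟩
    · obtain ⟨C₁, a1, a2, a3⟩ := IH h' (Nat.lt_succ_self h') a Γp (nIter n A ::ₘ Γ₂') Δ hg
        (by rw [Multiset.add_cons, ← hrest]; exact D1)
      obtain ⟨C₂, b1, b2, b3⟩ := IH h' (Nat.lt_succ_self h') a Γp (nIter n B ::ₘ Γ₂') Δ hg
        (by rw [Multiset.add_cons, ← hrest]; exact D2)
      refine ⟨Formula.and C₁ C₂, P_rand a1 b1, ?_, ?_⟩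
      · rw [hG2]
        refine P_eq (Multiset.cons_swap _ _ _)
          (P_lorn n A B (Γ := nIter a (Formula.and C₁ C₂) ::ₘ Γ₂') ?_ ?_)
        · refine P_eq (Multiset.cons_swap _ _ _) (P_landn a C₁ C₂ ?_)
          exact P_eq (Multiset.cons_swap _ _ _) (P_cons _ a2)
        · refine P_eq (Multiset.cons_swap _ _ _) (P_landn a C₁ C₂ ?_)
          exact P_cons _ b2
      · intro p hp
        have hp' : p ∈ C₁.atoms ∨ p ∈ C₂.atoms := by
          simpa [Formula.atoms] using hp
        have key : ∀ (Y : Formula), (Y.atoms ⊆ (Formula.or A B).atoms) →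
            (inCtx p (nIter n Y ::ₘ Γ₂') ∨ inOpt p Δ) →
            (inCtx p Γ₂ ∨ inOpt p Δ) := by
          intro Y hY r
          rcases r with r | r
          · rcases inCtx_cons.1 r with hA | r
            · refine Or.inl ?_
              rw [hG2]
              refine inCtx_cons.2 (Or.inl ?_)
              rw [nIter_atoms] at hA
              rw [nIter_atoms]
              exact hY hA
            · exact Or.inl (by rw [hG2]; exact inCtx_cons.2 (Or.inr r))
          · exact Or.inr r
        rcases hp' with hp' | hp'
        · obtain ⟨l, r⟩ := a3 p hp'
          exact ⟨l, key A (by rw [Formula.atoms]; exact Finset.subset_union_left) r⟩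
        · obtain ⟨l, r⟩ := b3 p hp'
          exact ⟨l, key B (by rw [Formula.atoms]; exact Finset.subset_union_right) r⟩
  | ror1 B D =>
    rename_i h' A
    obtain ⟨C, c1, c2, c3⟩ := IH h' (Nat.lt_succ_self h') a Γp Γ₂ (some A) hg (hE ▸ D)
    refine ⟨C, c1, P_ror1 B c2, ?_⟩
    intro p hp
    obtain ⟨l, r⟩ := c3 p hp
    refine ⟨l, ?_⟩
    rcases r with r | r
    · exact Or.inl r
    · refine Or.inr (inOpt_some.2 ?_)
      have := inOpt_some.1 r
      simp only [Formula.atoms, Finset.mem_union]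
      exact Or.inl this
  | ror2 A D =>
    rename_i h' B
    obtain ⟨C, c1, c2, c3⟩ := IH h' (Nat.lt_succ_self h') a Γp Γ₂ (some B) hg (hE ▸ D)
    refine ⟨C, c1, P_ror2 A c2, ?_⟩
    intro p hp
    obtain ⟨l, r⟩ := c3 p hp
    refine ⟨l, ?_⟩
    rcases r with r | r
    · exact Or.inl r
    · refine Or.inr (inOpt_some.2 ?_)
      have := inOpt_some.1 r
      simp only [Formula.atoms, Finset.mem_union]
      exact Or.inr this
  | limpn n A B D1 D2 =>
    rename_i h' Γ'
    rcases cons_eq_split hE.symm with ⟨q, Γp', hq, hfq, hrest⟩ | ⟨Γ₂', hG2, hrest⟩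
    · -- principal in the pair zone
      obtain ⟨g, X⟩ := q
      obtain ⟨hgn0, hX0⟩ := nIter_eq_cases (Y := Formula.imp A B)
        (fun Z hz => by cases hz) hfq
      have hgn : g ≤ n + 1 := hgn0
      have hX : X = nIter (n + 1 - g) (Formula.imp A B) := hX0
      have hXatoms : X.atoms = A.atoms ∪ B.atoms := by
        rw [hX, nIter_atoms, Formula.atoms]
      have hqmem : (g, X) ∈ Γp := by rw [hq]; exact Multiset.mem_cons_self _ _
      have hmain : Γp.map pF = nIter (n+1) (Formula.imp A B) ::ₘ Γp'.map pF := by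
        rw [hq, Multiset.map_cons, hfq]
      obtain ⟨C₁, s1, s2, s3⟩ := swap_call (IH h' (Nat.lt_succ_self h'))
        (Γleft := Γ₂) (Γright := Γp.map pF) (Δ := some (nIter n A)) (hE.symm ▸ D1)
      obtain ⟨C₂, t1, t2, t3⟩ := plain_call (IH h' (Nat.lt_succ_self h'))
        (Γp := (n, B) ::ₘ Γp) (Γ₂ := Γ₂) (Δ := Δ)
        (by
          rw [Multiset.map_cons, Multiset.cons_add]
          show iKd h' (nIter n B ::ₘ (Γp.map pF + Γ₂)) Δ
          rw [hE]
          exact D2)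
      refine ⟨tpow a (Formula.himp C₁ C₂), ?_, ?_, ?_⟩
      · apply T1 a Γp _ hg
        apply P_rhimp
        refine P_eq ?_ (P_limpn n A B (Γ := C₁ ::ₘ Γp'.map pF) ?_ ?_)
        · rw [hmain]
          exact Multiset.cons_swap _ _ _
        · refine P_eq ?_ s2
          rw [hmain]
          exact Multiset.cons_swap _ _ _
        · have t1' : iKdProvable (nIter n B ::ₘ nIter (n+1) (Formula.imp A B) ::ₘ
              Γp'.map pF) (some C₂) := by
            rw [Multiset.map_cons, hmain] at t1
            exact t1
          exact P_eq (cons_rot3 _ _ _ _) (P_cons C₁ t1')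
      · apply T2
        have key : iKdProvable (nIter 0 (Formula.himp C₁ C₂) ::ₘ Γ₂) Δ := by
          apply P_lhimpn 0 C₁ C₂
          · exact P_cons _ s1
          · exact t2
        exact key
      · intro p hp
        have hp' : p ∈ C₁.atoms ∨ p ∈ C₂.atoms := by
          rw [tpow_atoms] at hp
          simpa [Formula.atoms] using hp
        rcases hp' with hp' | hp'
        · obtain ⟨l, r⟩ := s3 p hp'
          refine ⟨?_, Or.inl l⟩
          rcases r with r | r
          · exact atoms_map_pF.1 r
          · refine ⟨(g, X), hqmem, ?_⟩
            have hpA : p ∈ A.atoms := by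
              have := inOpt_some.1 r
              rwa [nIter_atoms] at this
            rw [hXatoms, Finset.mem_union]
            exact Or.inl hpA
        · obtain ⟨⟨qq, hqq, hqq2⟩, r⟩ := t3 p hp'
          refine ⟨?_, r⟩
          rcases Multiset.mem_cons.1 hqq with rfl | hqq
          · refine ⟨(g, X), hqmem, ?_⟩
            rw [hXatoms, Finset.mem_union]
            exact Or.inr hqq2
          · exact ⟨qq, hqq, hqq2⟩
    · -- principal in Γ₂
      obtain ⟨C₁, u1, u2, u3⟩ := IH h' (Nat.lt_succ_self h') a Γp Γ₂ (some (nIter n A)) hg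
        (hE.symm ▸ D1)
      obtain ⟨C₂, v1, v2, v3⟩ := IH h' (Nat.lt_succ_self h') a Γp
        (nIter n B ::ₘ Γ₂) Δ hg
        (by
          rw [Multiset.add_cons, hE]
          exact D2)
      refine ⟨Formula.and C₁ C₂, P_rand u1 v1, ?_, ?_⟩
      · rw [hG2]
        refine P_eq (Multiset.cons_swap _ _ _)
          (P_limpn n A B (Γ := nIter a (Formula.and C₁ C₂) ::ₘ Γ₂') ?_ ?_)
        · refine P_eq (Multiset.cons_swap _ _ _) (P_landn a C₁ C₂ ?_)
          refine P_eq (Multiset.cons_swap _ _ _) (P_cons _ ?_)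
          exact P_eq (by rw [hG2]) u2
        · refine P_eq (cons_rot3 _ _ _ _) (P_landn a C₁ C₂ (Γ := nIter n B ::ₘ
            nIter (n+1) (Formula.imp A B) ::ₘ Γ₂') ?_)
          refine P_cons _ ?_
          exact P_eq (by rw [hG2]) v2
      · intro p hp
        have hp' : p ∈ C₁.atoms ∨ p ∈ C₂.atoms := by
          simpa [Formula.atoms] using hp
        have hprin : ∀ p', p' ∈ A.atoms ∪ B.atoms → inCtx p' Γ₂ := by
          intro p' hp2
          rw [hG2]
          refine inCtx_cons.2 (Or.inl ?_)
          rw [nIter_atoms, Formula.atoms]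
          exact hp2
        rcases hp' with hp' | hp'
        · obtain ⟨l, r⟩ := u3 p hp'
          refine ⟨l, ?_⟩
          rcases r with r | r
          · exact Or.inl r
          · refine Or.inl (hprin p ?_)
            have := inOpt_some.1 r
            rw [nIter_atoms] at this
            exact Finset.mem_union.2 (Or.inl this)
        · obtain ⟨l, r⟩ := v3 p hp'
          refine ⟨l, ?_⟩
          rcases r with r | r
          · rcases inCtx_cons.1 r with hB | r
            · refine Or.inl (hprin p ?_)
              rw [nIter_atoms] at hB
              exact Finset.mem_union.2 (Or.inr hB)
            · exact Or.inl r
          · exact Or.inr r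
  | rimp D =>
    rename_i h' A B
    have e1 : (Γp.map pF + Γ₂).map Formula.nabla
        = (Γp.map (fun q => (q.1 + 1, q.2))).map pF + Γ₂.map Formula.nabla := by
      rw [Multiset.map_add, Multiset.map_map, Multiset.map_map]
      congr 1
      apply Multiset.map_congr rfl
      intro q _
      simp only [Function.comp, pF]
      exact (nIter_succ _ _).symm
    have e2 : A ::ₘ (Γp.map pF + Γ₂).map Formula.nabla
        = (Γp.map (fun q => (q.1 + 1, q.2))).map pF + (A ::ₘ Γ₂.map Formula.nabla) := by
      rw [e1, Multiset.add_cons]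
    obtain ⟨C, c1, c2, c3⟩ := IH h' (Nat.lt_succ_self h') (a+1)
      (Γp.map (fun q => (q.1 + 1, q.2))) (A ::ₘ Γ₂.map Formula.nabla) (some B)
      (by
        intro q hq
        obtain ⟨q', hq', rfl⟩ := Multiset.mem_map.1 hq
        exact Nat.succ_le_succ (hg q' hq'))
      (by rw [← e2, hE]; exact D)
    refine ⟨C, ?_, ?_, ?_⟩
    · apply P_eq ?_ c1
      rw [Multiset.map_map]
      apply Multiset.map_congr rfl
      intro q _
      simp only [Function.comp, pD, Nat.succ_sub_succ]
    · apply P_rimp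
      have e3 : (nIter a C ::ₘ Γ₂).map Formula.nabla
          = nIter (a+1) C ::ₘ Γ₂.map Formula.nabla := by
        rw [Multiset.map_cons, ← nIter_succ]
      rw [e3]
      exact P_eq (Multiset.cons_swap _ _ _) c2
    · intro p hp
      obtain ⟨l, r⟩ := c3 p hp
      constructor
      · obtain ⟨q, hq, hq2⟩ := l
        obtain ⟨q', hq', rfl⟩ := Multiset.mem_map.1 hq
        exact ⟨q', hq', hq2⟩
      · rcases r with r | r
        · rcases inCtx_cons.1 r with hA | r
          · refine Or.inr (inOpt_some.2 ?_)
            simp only [Formula.atoms, Finset.mem_union]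
            exact Or.inl hA
          · exact Or.inl (inCtx_map_nabla.1 r)
        · refine Or.inr (inOpt_some.2 ?_)
          have := inOpt_some.1 r
          simp only [Formula.atoms, Finset.mem_union]
          exact Or.inr this
  | lhimpn n A B D1 D2 =>
    rename_i h' Γ'
    rcases cons_eq_split hE.symm with ⟨q, Γp', hq, hfq, hrest⟩ | ⟨Γ₂', hG2, hrest⟩
    · -- principal in the pair zone
      obtain ⟨g, X⟩ := q
      obtain ⟨hgn0, hX0⟩ := nIter_eq_cases (Y := Formula.himp A B)
        (fun Z hz => by cases hz) hfq
      have hgn : g ≤ n := hgn0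
      have hX : X = nIter (n - g) (Formula.himp A B) := hX0
      have hXatoms : X.atoms = A.atoms ∪ B.atoms := by
        rw [hX, nIter_atoms, Formula.atoms]
      have hqmem : (g, X) ∈ Γp := by rw [hq]; exact Multiset.mem_cons_self _ _
      have hmain : Γp.map pF = nIter n (Formula.himp A B) ::ₘ Γp'.map pF := by
        rw [hq, Multiset.map_cons, hfq]
      obtain ⟨C₁, s1, s2, s3⟩ := swap_call (IH h' (Nat.lt_succ_self h'))
        (Γleft := Γ₂) (Γright := Γp.map pF) (Δ := some (nIter n A)) (hE.symm ▸ D1)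
      obtain ⟨C₂, t1, t2, t3⟩ := plain_call (IH h' (Nat.lt_succ_self h'))
        (Γp := (n, B) ::ₘ Γp') (Γ₂ := Γ₂) (Δ := Δ)
        (by
          rw [Multiset.map_cons, Multiset.cons_add]
          show iKd h' (nIter n B ::ₘ (Γp'.map pF + Γ₂)) Δ
          rw [← hrest]
          exact D2)
      refine ⟨tpow a (Formula.himp C₁ C₂), ?_, ?_, ?_⟩
      · apply T1 a Γp _ hg
        apply P_rhimp
        refine P_eq ?_ (P_lhimpn n A B (Γ := C₁ ::ₘ Γp'.map pF) ?_ ?_)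
        · rw [hmain]
          exact Multiset.cons_swap _ _ _
        · refine P_eq ?_ s2
          rw [hmain]
          exact Multiset.cons_swap _ _ _
        · have t1' : iKdProvable (nIter n B ::ₘ Γp'.map pF) (some C₂) := by
            rw [Multiset.map_cons] at t1
            exact t1
          exact P_eq (Multiset.cons_swap _ _ _) (P_cons C₁ t1')
      · apply T2
        have key : iKdProvable (nIter 0 (Formula.himp C₁ C₂) ::ₘ Γ₂) Δ := by
          apply P_lhimpn 0 C₁ C₂
          · exact P_cons _ s1
          · exact t2
        exact key
      · intro p hp
        have hp' : p ∈ C₁.atoms ∨ p ∈ C₂.atoms := by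
          rw [tpow_atoms] at hp
          simpa [Formula.atoms] using hp
        rcases hp' with hp' | hp'
        · obtain ⟨l, r⟩ := s3 p hp'
          refine ⟨?_, Or.inl l⟩
          rcases r with r | r
          · exact atoms_map_pF.1 r
          · refine ⟨(g, X), hqmem, ?_⟩
            have hpA : p ∈ A.atoms := by
              have := inOpt_some.1 r
              rwa [nIter_atoms] at this
            rw [hXatoms, Finset.mem_union]
            exact Or.inl hpA
        · obtain ⟨⟨qq, hqq, hqq2⟩, r⟩ := t3 p hp'
          refine ⟨?_, r⟩
          rcases Multiset.mem_cons.1 hqq with rfl | hqq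
          · refine ⟨(g, X), hqmem, ?_⟩
            rw [hXatoms, Finset.mem_union]
            exact Or.inr hqq2
          · exact ⟨qq, by rw [hq]; exact Multiset.mem_cons_of_mem hqq, hqq2⟩
    · -- principal in Γ₂
      obtain ⟨C₁, u1, u2, u3⟩ := IH h' (Nat.lt_succ_self h') a Γp Γ₂ (some (nIter n A)) hg
        (hE.symm ▸ D1)
      obtain ⟨C₂, v1, v2, v3⟩ := IH h' (Nat.lt_succ_self h') a Γp
        (nIter n B ::ₘ Γ₂') Δ hg
        (by
          rw [Multiset.add_cons, ← hrest]
          exact D2)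
      refine ⟨Formula.and C₁ C₂, P_rand u1 v1, ?_, ?_⟩
      · rw [hG2]
        refine P_eq (Multiset.cons_swap _ _ _)
          (P_lhimpn n A B (Γ := nIter a (Formula.and C₁ C₂) ::ₘ Γ₂') ?_ ?_)
        · refine P_eq (Multiset.cons_swap _ _ _) (P_landn a C₁ C₂ ?_)
          refine P_eq (Multiset.cons_swap _ _ _) (P_cons _ ?_)
          exact P_eq (by rw [hG2]) u2
        · refine P_eq (Multiset.cons_swap _ _ _) (P_landn a C₁ C₂
            (Γ := nIter n B ::ₘ Γ₂') ?_)
          exact P_cons _ v2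
      · intro p hp
        have hp' : p ∈ C₁.atoms ∨ p ∈ C₂.atoms := by
          simpa [Formula.atoms] using hp
        have hprin : ∀ p', p' ∈ A.atoms ∪ B.atoms → inCtx p' Γ₂ := by
          intro p' hp2
          rw [hG2]
          refine inCtx_cons.2 (Or.inl ?_)
          rw [nIter_atoms, Formula.atoms]
          exact hp2
        rcases hp' with hp' | hp'
        · obtain ⟨l, r⟩ := u3 p hp'
          refine ⟨l, ?_⟩
          rcases r with r | r
          · exact Or.inl r
          · refine Or.inl (hprin p ?_)
            have := inOpt_some.1 r
            rw [nIter_atoms] at this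
            exact Finset.mem_union.2 (Or.inl this)
        · obtain ⟨l, r⟩ := v3 p hp'
          refine ⟨l, ?_⟩
          rcases r with r | r
          · rcases inCtx_cons.1 r with hB | r
            · refine Or.inl (hprin p ?_)
              rw [nIter_atoms] at hB
              exact Finset.mem_union.2 (Or.inr hB)
            · exact Or.inl (by rw [hG2]; exact inCtx_cons.2 (Or.inr r))
          · exact Or.inr r
  | rhimp D =>
    rename_i h' A B
    have e1 : A ::ₘ (Γp.map pF + Γ₂) = Γp.map pF + (A ::ₘ Γ₂) := by
      rw [Multiset.add_cons]
    obtain ⟨C, c1, c2, c3⟩ := IH h' (Nat.lt_succ_self h') a Γp (A ::ₘ Γ₂) (some B) hg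
      (by rw [← e1, hE]; exact D)
    refine ⟨C, c1, ?_, ?_⟩
    · apply P_rhimp
      exact P_eq (Multiset.cons_swap _ _ _) c2
    · intro p hp
      obtain ⟨l, r⟩ := c3 p hp
      refine ⟨l, ?_⟩
      rcases r with r | r
      · rcases inCtx_cons.1 r with hA | r
        · refine Or.inr (inOpt_some.2 ?_)
          simp only [Formula.atoms, Finset.mem_union]
          exact Or.inl hA
        · exact Or.inl r
      · refine Or.inr (inOpt_some.2 ?_)
        have := inOpt_some.1 r
        simp only [Formula.atoms, Finset.mem_union]
        exact Or.inr this
  | nrule D =>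
    rename_i h' Γ0 Δ0
    have hle2 : Γ₂ ≤ Γ0.map Formula.nabla := by
      rw [← hE]
      exact Multiset.le_add_left _ _
    have hlep : Γp.map pF ≤ Γ0.map Formula.nabla := by
      rw [← hE]
      exact Multiset.le_add_right _ _
    obtain ⟨S₂, hSle, hS⟩ := le_map_exists hle2
    have hshape : ∀ q ∈ Γp, Formula.nabla (pF (pd q)) = pF q ∧
        (pd q).2.atoms = q.2.atoms ∧ (pd q).1 = q.1 - 1 := by
      intro q hq
      have : pF q ∈ Γ0.map Formula.nabla :=
        Multiset.mem_of_le hlep (Multiset.mem_map_of_mem _ hq)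
      obtain ⟨Y, _, hY⟩ := Multiset.mem_map.1 this
      exact pd_spec hY.symm
    have e5 : ((Γp.map pd).map pF).map Formula.nabla = Γp.map pF := by
      rw [Multiset.map_map, Multiset.map_map]
      apply Multiset.map_congr rfl
      intro q hq
      exact (hshape q hq).1
    have e6 : (Γp.map pd).map pF + S₂ = Γ0 := by
      apply Multiset.map_injective (f := Formula.nabla) (fun _ _ h => Formula.nabla.inj h)
      rw [Multiset.map_add, e5, ← hS, hE]
    have hD' : iKd h' ((Γp.map pd).map pF + S₂) Δ0 := by
      rw [e6]
      exact D
    have atomtrans : ∀ (C0 : Formula), (∀ p ∈ C0.atoms,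
          inPairs p (Γp.map pd) ∧ (inCtx p S₂ ∨ inOpt p Δ0)) →
        ∀ p ∈ C0.atoms, inPairs p Γp ∧ (inCtx p Γ₂ ∨ inOpt p (Δ0.map Formula.nabla)) := by
      intro C0 c3 p hp
      obtain ⟨⟨qq, hqq, hqq2⟩, r⟩ := c3 p hp
      obtain ⟨q, hq, rfl⟩ := Multiset.mem_map.1 hqq
      refine ⟨⟨q, hq, by rwa [(hshape q hq).2.1] at hqq2⟩, ?_⟩
      rcases r with r | r
      · exact Or.inl (by rw [hS]; exact inCtx_map_nabla.2 r)
      · exact Or.inr (inOpt_map_nabla.2 r)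
    cases a with
    | zero =>
      obtain ⟨C₀, c1, c2, c3⟩ := IH h' (Nat.lt_succ_self h') 0 (Γp.map pd) S₂ Δ0
        (fun q _ => Nat.zero_le _) hD'
      refine ⟨Formula.nabla C₀, ?_, ?_, ?_⟩
      · rw [pD_zero] at c1 ⊢
        have := P_nrule c1
        rw [e5] at this
        exact this
      · have := P_nrule c2
        rw [Multiset.map_cons] at this
        rw [hS]
        exact this
      · intro p hp
        exact atomtrans C₀ c3 p (by simpa [Formula.atoms] using hp)
    | succ a' =>
      have hgr : ∀ q ∈ Γp.map pd, a' ≤ q.1 := by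
        intro q hq
        obtain ⟨q0, hq0, rfl⟩ := Multiset.mem_map.1 hq
        have h1 := hg q0 hq0
        have h2 := (hshape q0 hq0).2.2
        omega
      obtain ⟨C, c1, c2, c3⟩ := IH h' (Nat.lt_succ_self h') a' (Γp.map pd) S₂ Δ0 hgr hD'
      refine ⟨C, ?_, ?_, ?_⟩
      · apply P_eq ?_ c1
        rw [Multiset.map_map]
        apply Multiset.map_congr rfl
        intro q hq
        show nIter ((pd q).1 - a') (pd q).2 = nIter (q.1 - (a' + 1)) q.2
        have h2 := (hshape q hq).2.2
        have hgq := hg q hq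
        obtain ⟨g, X⟩ := q
        cases g with
        | zero => omega
        | succ g' =>
          have : pd (g' + 1, X) = (g', X) := by simp [pd]
          rw [this]
          show nIter (g' - a') X = nIter (g' + 1 - (a' + 1)) X
          rw [Nat.succ_sub_succ]
      · have := P_nrule c2
        rw [Multiset.map_cons, ← nIter_succ, ← hS] at this
        exact this
      · exact atomtrans C c3

/-- Maehara-style interpolation for `iK_d`. -/
theorem iKd_interpolation (Γ₁ Γ₂ : Multiset Formula) (Δ : Option Formula)
    (H : iKdProvable (Γ₁ + Γ₂) Δ) :
    ∃ C : Formula, iKdProvable Γ₁ (some C) ∧ iKdProvable (C ::ₘ Γ₂) Δ ∧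
      ∀ p ∈ C.atoms, (∃ A ∈ Γ₁, p ∈ A.atoms) ∧
        ((∃ A ∈ Γ₂, p ∈ A.atoms) ∨ ∃ D ∈ Δ, p ∈ D.atoms) := by
  obtain ⟨h, D⟩ := H
  obtain ⟨C, c1, c2, c3⟩ := interp_main h 0 (Γ₁.map fun A => ((0:ℕ), A)) Γ₂ Δ
    (fun q _ => Nat.zero_le _) (by rwa [map_zero_pairs_pF])
  refine ⟨C, by rwa [map_zero_pairs_pD] at c1, by simpa [nIter_zero] using c2, ?_⟩
  intro p hp
  obtain ⟨l, r⟩ := c3 p hp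
  refine ⟨?_, r⟩
  obtain ⟨q, hq, hq2⟩ := l
  obtain ⟨A, hA, rfl⟩ := Multiset.mem_map.1 hq
  exact ⟨A, hA, hq2⟩
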